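/- For a distribution (or smooth function) u on ℝ and the map Φ(x,y) = (x|y) on Ξ × Ξ where Ξ is the minimal cone: 𝓑_x u((x|y)) = y · u((x|y)) for all y ∈ Ξ if and only if u solves the ODE t u'' + λ u' − u = 0. (Smooth function version: assume u ∈ C²(ℝ).) -/

import Mathlib

open scoped RealInnerProductSpace

/-- The quadratic representation `P(x) = 2 L(x)² − L(x²)` of a Jordan product `mul`. -/
noncomputable def quadRep (n : ℕ)
    (mul : EuclideanSpace ℝ (Fin n) →ₗ[ℝ] EuclideanSpace ℝ (Fin n) →ₗ[ℝ] EuclideanSpace ℝ (Fin n))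
    (x : EuclideanSpace ℝ (Fin n)) :
    EuclideanSpace ℝ (Fin n) →ₗ[ℝ] EuclideanSpace ℝ (Fin n) :=
  2 • ((mul x).comp (mul x)) - mul (mul x x)

/-- The polarized quadratic representation `P(x,y) = ½(P(x+y) − P(x) − P(y))`. -/
noncomputable def quadRepPol (n : ℕ)
    (mul : EuclideanSpace ℝ (Fin n) →ₗ[ℝ] EuclideanSpace ℝ (Fin n) →ₗ[ℝ] EuclideanSpace ℝ (Fin n))
    (a b : EuclideanSpace ℝ (Fin n)) :
    EuclideanSpace ℝ (Fin n) →ₗ[ℝ] EuclideanSpace ℝ (Fin n) :=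
  (1 / 2 : ℝ) • (quadRep n mul (a + b) - quadRep n mul a - quadRep n mul b)

/-- The Bessel operator `𝓑_λ u = ∑_{α,β} ∂²u/∂x_α∂x_β P(e_α,e_β)x + λ ∑_α ∂u/∂x_α e_α`,
computed in the standard orthonormal basis of Euclidean space. -/
noncomputable def besselOp (n : ℕ)
    (mul : EuclideanSpace ℝ (Fin n) →ₗ[ℝ] EuclideanSpace ℝ (Fin n) →ₗ[ℝ] EuclideanSpace ℝ (Fin n))
    (l : ℝ) (f : EuclideanSpace ℝ (Fin n) → ℝ) (x : EuclideanSpace ℝ (Fin n)) :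
    EuclideanSpace ℝ (Fin n) :=
  (∑ α : Fin n, ∑ β : Fin n,
      iteratedFDeriv ℝ 2 f x
          ![EuclideanSpace.basisFun (Fin n) ℝ α, EuclideanSpace.basisFun (Fin n) ℝ β] •
        quadRepPol n mul (EuclideanSpace.basisFun (Fin n) ℝ α)
          (EuclideanSpace.basisFun (Fin n) ℝ β) x)
    + l • (∑ α : Fin n,
        fderiv ℝ f x (EuclideanSpace.basisFun (Fin n) ℝ α) • EuclideanSpace.basisFun (Fin n) ℝ α)

section Aux

variable {n : ℕ}

local notation "E" => EuclideanSpace ℝ (Fin n)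
local notation "e" => fun α => (EuclideanSpace.basisFun (Fin n) ℝ α : EuclideanSpace ℝ (Fin n))

lemma aux_inner_basis (y : E) (α : Fin n) : ⟪y, e α⟫ = y α := by
  simp [EuclideanSpace.basisFun_apply, PiLp.inner_apply, EuclideanSpace.single_apply]

lemma aux_sum_basis (y : E) : (∑ α, y α • e α) = y := by
  have h := (EuclideanSpace.basisFun (Fin n) ℝ).sum_repr' y
  have h2 : ∀ α : Fin n, ⟪e α, y⟫ = y α := fun α => by
    rw [real_inner_comm]; exact aux_inner_basis y α
  calc (∑ α, y α • e α) = ∑ α, ⟪e α, y⟫ • e α := by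
        refine Finset.sum_congr rfl fun α _ => by rw [h2]
    _ = y := h

lemma aux_lin_sum (G : E →ₗ[ℝ] E) (y : E) : ∑ α, y α • G (e α) = G y := by
  calc ∑ α, y α • G (e α) = ∑ α, G (y α • e α) := by simp [map_smul]
    _ = G (∑ α, y α • e α) := (map_sum G _ _).symm
    _ = G y := by rw [aux_sum_basis]

lemma aux_hasFDeriv_comp (u : ℝ → ℝ) (hu : Differentiable ℝ u) (y x : E) :
    HasFDerivAt (fun v : E => u ⟪v, y⟫) (deriv u ⟪x, y⟫ • (innerSL ℝ y)) x := by
  have hg : HasFDerivAt (fun v : E => ⟪v, y⟫) (innerSL ℝ y) x := by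
    have h : (fun v : E => ⟪v, y⟫) = fun v => (innerSL ℝ y) v :=
      funext fun v => (real_inner_comm v y).symm
    rw [h]
    exact (innerSL ℝ y).hasFDerivAt
  exact (hu ⟪x, y⟫).hasDerivAt.comp_hasFDerivAt x hg

lemma aux_contDiff_one_deriv (u : ℝ → ℝ) (hu : ContDiff ℝ 2 u) : ContDiff ℝ 1 (deriv u) := by
  have h : ContDiff ℝ ((1 : ℕ) + 1) u := by exact_mod_cast hu
  exact (contDiff_succ_iff_deriv.mp h).2.2

lemma aux_second_deriv (u : ℝ → ℝ) (hu : ContDiff ℝ 2 u) (y x : E) (a b : E) :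
    iteratedFDeriv ℝ 2 (fun v : E => u ⟪v, y⟫) x ![a, b]
      = deriv (deriv u) ⟪x, y⟫ * ⟪y, a⟫ * ⟪y, b⟫ := by
  have hu1 : Differentiable ℝ u := hu.differentiable (by norm_num)
  have hd1 : Differentiable ℝ (deriv u) := (aux_contDiff_one_deriv u hu).differentiable (by norm_num)
  have hF : fderiv ℝ (fun v : E => u ⟪v, y⟫) = fun x : E => deriv u ⟪x, y⟫ • (innerSL ℝ y) :=
    funext fun x => (aux_hasFDeriv_comp u hu1 y x).fderiv
  set L : ℝ →L[ℝ] (E →L[ℝ] ℝ) := (ContinuousLinearMap.id ℝ ℝ).smulRight (innerSL ℝ y) with hL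
  have hinner : HasFDerivAt (fun x : E => deriv u ⟪x, y⟫)
      (deriv (deriv u) ⟪x, y⟫ • (innerSL ℝ y)) x := aux_hasFDeriv_comp (deriv u) hd1 y x
  have heq : (fun x : E => deriv u ⟪x, y⟫ • (innerSL ℝ y))
      = L ∘ (fun x : E => deriv u ⟪x, y⟫) := by
    funext v; simp [L, Function.comp]
  have hFd : HasFDerivAt (fun x : E => deriv u ⟪x, y⟫ • (innerSL ℝ y))
      (L.comp (deriv (deriv u) ⟪x, y⟫ • (innerSL ℝ y))) x := by
    rw [heq]; exact L.hasFDerivAt.comp x hinner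
  rw [iteratedFDeriv_two_apply, hF, hFd.fderiv]
  simp only [ContinuousLinearMap.coe_comp', Function.comp_apply, ContinuousLinearMap.smul_apply,
    ContinuousLinearMap.smulRight_apply, ContinuousLinearMap.id_apply, smul_eq_mul,
    innerSL_apply_apply, Matrix.cons_val_zero, Matrix.cons_val_one, Matrix.head_cons, L]

lemma aux_pol_apply
    (mul : EuclideanSpace ℝ (Fin n) →ₗ[ℝ] EuclideanSpace ℝ (Fin n) →ₗ[ℝ] EuclideanSpace ℝ (Fin n))
    (hcomm : ∀ a b, mul a b = mul b a) (a b x : EuclideanSpace ℝ (Fin n)) :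
    quadRepPol n mul a b x = mul a (mul b x) + mul b (mul a x) - mul (mul a b) x := by
  simp only [quadRepPol, quadRep, LinearMap.smul_apply, LinearMap.sub_apply, LinearMap.comp_apply,
    map_add, LinearMap.add_apply, LinearMap.smul_apply]
  rw [hcomm b a]
  module

lemma aux_double_sum
    (mul : EuclideanSpace ℝ (Fin n) →ₗ[ℝ] EuclideanSpace ℝ (Fin n) →ₗ[ℝ] EuclideanSpace ℝ (Fin n))
    (hcomm : ∀ a b, mul a b = mul b a) (r : ℝ) (y x : E) :
    ∑ α, ∑ β, (r * y α * y β) • quadRepPol n mul (e α) (e β) x = r • quadRep n mul y x := by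
  have hinner : ∀ α : Fin n,
      ∑ β, y β • quadRepPol n mul (e α) (e β) x
        = mul (e α) (mul y x) + mul y (mul (e α) x) - mul (mul (e α) y) x := by
    intro α
    have := aux_lin_sum ((mul (e α)).comp (mul.flip x) + mul.flip (mul (e α) x)
      - (mul.flip x).comp (mul (e α))) y
    simp only [LinearMap.sub_apply, LinearMap.add_apply, LinearMap.comp_apply,
      LinearMap.flip_apply] at this
    calc ∑ β, y β • quadRepPol n mul (e α) (e β) x
        = ∑ β, y β • (mul (e α) (mul (e β) x) + mul (e β) (mul (e α) x)
            - mul (mul (e α) (e β)) x) := by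
          refine Finset.sum_congr rfl fun β _ => by rw [aux_pol_apply mul hcomm]
      _ = _ := this
  have houter := aux_lin_sum (mul.flip (mul y x) + (mul y).comp (mul.flip x)
      - (mul.flip x).comp (mul.flip y)) y
  simp only [LinearMap.sub_apply, LinearMap.add_apply, LinearMap.comp_apply,
    LinearMap.flip_apply] at houter
  calc ∑ α, ∑ β, (r * y α * y β) • quadRepPol n mul (e α) (e β) x
      = r • ∑ α, y α • ∑ β, y β • quadRepPol n mul (e α) (e β) x := by
        rw [Finset.smul_sum]
        refine Finset.sum_congr rfl fun α _ => ?_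
        rw [Finset.smul_sum, Finset.smul_sum]
        refine Finset.sum_congr rfl fun β _ => by simp only [smul_smul, mul_assoc]
    _ = r • ∑ α, y α • (mul (e α) (mul y x) + mul y (mul (e α) x) - mul (mul (e α) y) x) := by
        rw [Finset.smul_sum, Finset.smul_sum]
        exact Finset.sum_congr rfl fun α _ => by rw [hinner α]
    _ = r • (mul y (mul y x) + mul y (mul y x) - mul (mul y y) x) := by
        congr 1
    _ = r • quadRep n mul y x := by
        simp [quadRep, two_smul, LinearMap.sub_apply, LinearMap.smul_apply, LinearMap.comp_apply]

/-- Evaluation of the Bessel operator on `u(⟪·,y⟫)`. -/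
lemma aux_bessel_eval
    (mul : EuclideanSpace ℝ (Fin n) →ₗ[ℝ] EuclideanSpace ℝ (Fin n) →ₗ[ℝ] EuclideanSpace ℝ (Fin n))
    (hcomm : ∀ a b, mul a b = mul b a) (l : ℝ)
    (u : ℝ → ℝ) (hu : ContDiff ℝ 2 u) (y x : E) :
    besselOp n mul l (fun v => u ⟪v, y⟫) x
      = deriv (deriv u) ⟪x, y⟫ • quadRep n mul y x + (l * deriv u ⟪x, y⟫) • y := by
  have hu1 : Differentiable ℝ u := hu.differentiable (by norm_num)
  unfold besselOp
  have h1 : (∑ α : Fin n, ∑ β : Fin n,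
      iteratedFDeriv ℝ 2 (fun v => u ⟪v, y⟫) x ![e α, e β] • quadRepPol n mul (e α) (e β) x)
      = deriv (deriv u) ⟪x, y⟫ • quadRep n mul y x := by
    have := aux_double_sum mul hcomm (deriv (deriv u) ⟪x, y⟫) y x
    rw [← this]
    refine Finset.sum_congr rfl fun α _ => Finset.sum_congr rfl fun β _ => ?_
    rw [aux_second_deriv u hu y x, aux_inner_basis, aux_inner_basis]
  have h2 : (∑ α : Fin n, fderiv ℝ (fun v => u ⟪v, y⟫) x (e α) • e α)
      = deriv u ⟪x, y⟫ • y := by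
    calc (∑ α : Fin n, fderiv ℝ (fun v => u ⟪v, y⟫) x (e α) • e α)
        = ∑ α : Fin n, (deriv u ⟪x, y⟫ * y α) • e α := by
          refine Finset.sum_congr rfl fun α _ => ?_
          rw [(aux_hasFDeriv_comp u hu1 y x).fderiv]
          simp [aux_inner_basis, real_inner_comm, EuclideanSpace.inner_single_right]
      _ = deriv u ⟪x, y⟫ • ∑ α : Fin n, y α • e α := by
          rw [Finset.smul_sum]
          exact Finset.sum_congr rfl fun α _ => by rw [smul_smul]
      _ = deriv u ⟪x, y⟫ • y := by rw [aux_sum_basis]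
  rw [h1, h2, smul_smul]

end Aux

/-- Characterization of the Bessel-equation: for `u ∈ C²(ℝ)` and a set `Ξ` (the minimal cone)
whose elements satisfy `P(y)x = (x|y)y`, one has
`𝓑_x u((x|y)) = u((x|y))·y` for all `y ∈ Ξ` and all `x`
if and only if `u` solves `t u'' + λ u' − u = 0`. -/
theorem stmt_13 (n : ℕ)
    (mul : EuclideanSpace ℝ (Fin n) →ₗ[ℝ] EuclideanSpace ℝ (Fin n) →ₗ[ℝ] EuclideanSpace ℝ (Fin n))
    (hcomm : ∀ a b, mul a b = mul b a)
    (hjordan : ∀ a b, mul (mul a b) (mul a a) = mul a (mul b (mul a a)))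
    (hassoc : ∀ a b c, ⟪mul a b, c⟫ = ⟪b, mul a c⟫)
    (l : ℝ) (Ξ : Set (EuclideanSpace ℝ (Fin n)))
    (hΞ : ∀ y ∈ Ξ, ∀ x : EuclideanSpace ℝ (Fin n), quadRep n mul y x = ⟪x, y⟫ • y)
    (hne : ∃ y ∈ Ξ, y ≠ 0)
    (u : ℝ → ℝ) (hu : ContDiff ℝ 2 u) :
    (∀ y ∈ Ξ, ∀ x : EuclideanSpace ℝ (Fin n),
        besselOp n mul l (fun v => u ⟪v, y⟫) x = u ⟪x, y⟫ • y)
      ↔ (∀ t : ℝ, t * deriv (deriv u) t + l * deriv u t - u t = 0) := by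
  have key : ∀ (y x : EuclideanSpace ℝ (Fin n)), y ∈ Ξ →
      besselOp n mul l (fun v => u ⟪v, y⟫) x
        = (⟪x, y⟫ * deriv (deriv u) ⟪x, y⟫ + l * deriv u ⟪x, y⟫) • y := by
    intro y x hy
    rw [aux_bessel_eval mul hcomm l u hu y x, hΞ y hy x, smul_smul, ← add_smul]
    ring_nf
  constructor
  · intro h t
    obtain ⟨y, hy, hyne⟩ := hne
    have hyy : ⟪y, y⟫ ≠ 0 := by
      rw [real_inner_self_eq_norm_sq]
      exact pow_ne_zero 2 (norm_ne_zero_iff.mpr hyne)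
    set x : EuclideanSpace ℝ (Fin n) := (t / ⟪y, y⟫) • y with hx
    have hxy : ⟪x, y⟫ = t := by
      rw [hx, real_inner_smul_left, div_mul_cancel₀ _ hyy]
    have heq := h y hy x
    rw [key y x hy, hxy] at heq
    have : (t * deriv (deriv u) t + l * deriv u t - u t) • y = 0 := by
      rw [sub_smul, heq, sub_self]
    rcases smul_eq_zero.mp this with h0 | h0
    · exact h0
    · exact absurd h0 hyne
  · intro h y hy x
    rw [key y x hy]
    have := h ⟪x, y⟫
    have hval : ⟪x, y⟫ * deriv (deriv u) ⟪x, y⟫ + l * deriv u ⟪x, y⟫ = u ⟪x, y⟫ := by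
      linarith
    rw [hval]
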